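/- arXiv:2602.17392 — 3 statements merged into one kernel-verified Lean document; each statement's English description precedes it below -/
import Mathlib

section
/- Tailored value-function cut, validity (first part of Lemma 1 of the paper): let (y′,z*) be a bilevel feasible pair and let Φ_tail be the tailored value-function bound built from (y′,z*). Then every bilevel feasible pair (y,z) satisfies π^F(y,z) ≥ Φ_tail(y). -/
open Finset

attribute [local instance] Classical.propDecidable

/-- Data of an instance of the competitive dynamic facility location problem under
cumulative customer demand (CDFLP-CCD).  `pref j a b` means that customer `j`
strictly prefers option `a` over option `b`, where `none` is the no-service option. -/
structure CDFLP (I J : Type*) where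
  /-- number of time periods; the period set is `{1, …, T}` -/
  T : ℕ
  /-- spawning demand of customer `j` at period `t` -/
  d : J → ℕ → ℝ
  /-- reward per unit of demand captured at location `i` -/
  r : I → ℝ
  /-- splitting factor -/
  ρ : ℝ
  /-- strict preference: `pref j a b` means `a ≻_j b` -/
  pref : J → Option I → Option I → Prop

namespace CDFLP

variable {I J : Type*} [Fintype I] [Fintype J]

/-- The model hypotheses: `T ≥ 1`, nonnegative demands and rewards, `ρ ∈ [0,1]`,
and every `≻_j` is a strict linear order on `I ∪ {0}`. -/
def Valid (P : CDFLP I J) : Prop :=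
  1 ≤ P.T ∧ (∀ j t, 0 ≤ P.d j t) ∧ (∀ i, 0 ≤ P.r i) ∧
    0 ≤ P.ρ ∧ P.ρ ≤ 1 ∧ ∀ j, IsStrictTotalOrder (Option I) (P.pref j)

/-- The locations considered by customer `j`, i.e. those preferred over no service. -/
noncomputable def considered (P : CDFLP I J) (j : J) : Finset I :=
  Finset.univ.filter fun i => P.pref j (some i) none

/-- `w` is a location schedule: on the planning horizon it is `{0,1}`-valued and opens
at most one facility per period. -/
def IsSched (P : CDFLP I J) (w : I → ℕ → ℝ) : Prop :=
  ∀ t, 1 ≤ t → t ≤ P.T → (∀ i, w i t = 0 ∨ w i t = 1) ∧ (∑ i, w i t) ≤ 1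

/-- `A_j^t(y,z)`: considered locations of `j` opened by the leader or the follower
at period `t`. -/
noncomputable def captureSet (P : CDFLP I J) (y z : I → ℕ → ℝ) (j : J) (t : ℕ) : Finset I :=
  Finset.univ.filter fun i => P.pref j (some i) none ∧ (y i t = 1 ∨ z i t = 1)

/-- `t ∈ 𝒯` is a capture period of customer `j`. -/
def IsCapture (P : CDFLP I J) (y z : I → ℕ → ℝ) (j : J) (t : ℕ) : Prop :=
  1 ≤ t ∧ t ≤ P.T ∧ (P.captureSet y z j t).Nonempty

/-- `i` is the `≻_j`-greatest element of the capture set `A_j^t(y,z)`,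
i.e. `i = i*(j,t)`. -/
def IsPatron (P : CDFLP I J) (y z : I → ℕ → ℝ) (j : J) (t : ℕ) (i : I) : Prop :=
  i ∈ P.captureSet y z j t ∧
    ∀ k ∈ P.captureSet y z j t, k ≠ i → P.pref j (some i) (some k)

/-- The greatest capture period of `j` smaller than `t` (`0` if there is none). -/
noncomputable def lastCap (P : CDFLP I J) (y z : I → ℕ → ℝ) (j : J) (t : ℕ) : ℕ :=
  ((Finset.Ico 1 t).filter fun s => P.IsCapture y z j s).sup id

/-- `D_j^{ℓt}`: demand of customer `j` spawned in periods `ℓ+1, …, t`. -/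
noncomputable def D (P : CDFLP I J) (j : J) (ℓ t : ℕ) : ℝ :=
  ∑ s ∈ Finset.Icc (ℓ + 1) t, P.d j s

/-- `v_{ij}^{ℓt}(y,z)`: fraction of `D_j^{ℓt}` captured by the follower through
location `i` at period `t`. -/
noncomputable def v (P : CDFLP I J) (y z : I → ℕ → ℝ) (j : J) (i : I) (ℓ t : ℕ) : ℝ :=
  if P.IsCapture y z j t ∧ ℓ = P.lastCap y z j t ∧ P.IsPatron y z j t i ∧ z i t = 1 then
    1 - P.ρ * y i t
  else 0

/-- `u_{ij}^{ℓt}(y,z)`: fraction of `D_j^{ℓt}` captured by the leader through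
location `i` at period `t`. -/
noncomputable def u (P : CDFLP I J) (y z : I → ℕ → ℝ) (j : J) (i : I) (ℓ t : ℕ) : ℝ :=
  if P.IsCapture y z j t ∧ ℓ = P.lastCap y z j t ∧ P.IsPatron y z j t i ∧ y i t = 1 then
    1 - (1 - P.ρ) * z i t
  else 0

/-- The follower's profit `π^F(y,z)`. -/
noncomputable def profitF (P : CDFLP I J) (y z : I → ℕ → ℝ) : ℝ :=
  ∑ t ∈ Finset.Icc 1 P.T, ∑ ℓ ∈ Finset.range t, ∑ j : J, ∑ i ∈ P.considered j,
    P.r i * P.D j ℓ t * P.v y z j i ℓ t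

/-- The leader's profit `π^L(y,z)`. -/
noncomputable def profitL (P : CDFLP I J) (y z : I → ℕ → ℝ) : ℝ :=
  ∑ t ∈ Finset.Icc 1 P.T, ∑ ℓ ∈ Finset.range t, ∑ j : J, ∑ i ∈ P.considered j,
    P.r i * P.D j ℓ t * P.u y z j i ℓ t

/-- `(y,z)` is bilevel feasible: both are schedules and `z` is an optimal
reaction of the follower against `y`. -/
def BilevelFeasible (P : CDFLP I J) (y z : I → ℕ → ℝ) : Prop :=
  P.IsSched y ∧ P.IsSched z ∧ ∀ z', P.IsSched z' → P.profitF y z' ≤ P.profitF y z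


/-- The tailored value-function bound built from the pair `(y', zs)`, evaluated at a
leader schedule `y`. -/
noncomputable def tailoredBound (P : CDFLP I J) (y' zs y : I → ℕ → ℝ) : ℝ :=
  ∑ t ∈ Finset.Icc 1 P.T, ∑ ℓ ∈ Finset.range t, ∑ j : J, ∑ i ∈ P.considered j,
    P.r i * P.D j ℓ t * P.v y' zs j i ℓ t *
      (1 - (∑ k ∈ P.considered j, ∑ s ∈ Finset.Ioo ℓ t, y k s)
         - (∑ k ∈ Finset.univ.filter fun k => P.pref j (some k) (some i), y k t)
         - (if P.v y' zs j i ℓ t = 1 ∧ 0 < P.ρ then 1 else 0) * y i t)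

lemma sched_nonneg {P : CDFLP I J} {w : I → ℕ → ℝ} (hw : P.IsSched w) {t : ℕ}
    (h1 : 1 ≤ t) (h2 : t ≤ P.T) (i : I) : 0 ≤ w i t := by
  rcases (hw t h1 h2).1 i with h | h <;> rw [h] <;> norm_num

lemma sched_le_one {P : CDFLP I J} {w : I → ℕ → ℝ} (hw : P.IsSched w) {t : ℕ}
    (h1 : 1 ≤ t) (h2 : t ≤ P.T) (i : I) : w i t ≤ 1 := by
  rcases (hw t h1 h2).1 i with h | h <;> rw [h] <;> norm_num

lemma v_nonneg {P : CDFLP I J} (hρ0 : 0 ≤ P.ρ) (hρ1 : P.ρ ≤ 1)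
    {y z : I → ℕ → ℝ} (hy : P.IsSched y) (j : J) (i : I) (ℓ t : ℕ) :
    0 ≤ P.v y z j i ℓ t := by
  unfold v
  split_ifs with h
  · obtain ⟨⟨h1, h2, -⟩, -⟩ := h
    rcases (hy t h1 h2).1 i with h | h <;> rw [h] <;> nlinarith
  · exact le_refl 0

lemma D_nonneg {P : CDFLP I J} (hd : ∀ j t, 0 ≤ P.d j t) (j : J) (ℓ t : ℕ) :
    0 ≤ P.D j ℓ t :=
  Finset.sum_nonneg fun s _ => hd j s

lemma D_anti {P : CDFLP I J} (hd : ∀ j t, 0 ≤ P.d j t) {ℓ1 ℓ0 : ℕ} (h : ℓ1 ≤ ℓ0)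
    (j : J) (t : ℕ) : P.D j ℓ0 t ≤ P.D j ℓ1 t :=
  Finset.sum_le_sum_of_subset_of_nonneg
    (Finset.Icc_subset_Icc (by omega) le_rfl) (fun s _ _ => hd j s)

lemma lastCap_lt {P : CDFLP I J} (y z : I → ℕ → ℝ) (j : J) {t : ℕ} (ht : 1 ≤ t) :
    P.lastCap y z j t < t := by
  unfold lastCap
  refine (Finset.sup_lt_iff (by simp only [bot_eq_zero]; omega : (⊥ : ℕ) < t)).2 ?_
  intro s hs
  exact (Finset.mem_Ico.1 (Finset.mem_filter.1 hs).1).2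

lemma le_lastCap {P : CDFLP I J} {y z : I → ℕ → ℝ} {j : J} {s t : ℕ}
    (hs1 : 1 ≤ s) (hst : s < t) (hc : P.IsCapture y z j s) :
    s ≤ P.lastCap y z j t :=
  Finset.le_sup (f := id)
    (Finset.mem_filter.2 ⟨Finset.mem_Ico.2 ⟨hs1, hst⟩, hc⟩)

lemma isPatron_unique {P : CDFLP I J}
    (hpref : ∀ j, IsStrictTotalOrder (Option I) (P.pref j))
    {y z : I → ℕ → ℝ} {j : J} {t : ℕ} {i i' : I}
    (h : P.IsPatron y z j t i) (h' : P.IsPatron y z j t i') : i = i' := by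
  by_contra hne
  haveI := hpref j
  have h1 : P.pref j (some i) (some i') := h.2 i' h'.1 (by simpa using Ne.symm hne)
  have h2 : P.pref j (some i') (some i) := h'.2 i h.1 (by simpa using hne)
  exact irrefl_of (P.pref j) (some i) (trans_of (P.pref j) h1 h2)

lemma tailored_le_profitF (P : CDFLP I J) (hP : P.Valid) {y' zs y : I → ℕ → ℝ}
    (hy' : P.IsSched y') (hzs : P.IsSched zs) (hy : P.IsSched y) :
    P.tailoredBound y' zs y ≤ P.profitF y zs := by
  obtain ⟨hT, hd, hr, hρ0, hρ1, hpref⟩ := hP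
  unfold tailoredBound profitF
  have hcomm : ∀ (g : ℕ → J → ℝ) (t : ℕ),
      ∑ ℓ ∈ Finset.range t, ∑ j : J, g ℓ j = ∑ j : J, ∑ ℓ ∈ Finset.range t, g ℓ j :=
    fun g t => Finset.sum_comm
  simp_rw [hcomm]
  refine Finset.sum_le_sum ?_
  intro t ht
  rw [Finset.mem_Icc] at ht
  refine Finset.sum_le_sum ?_
  intro j _
  -- nonnegativity of the right-hand side terms
  have hRnn : ∀ ℓ ∈ Finset.range t, ∀ i ∈ P.considered j,
      0 ≤ P.r i * P.D j ℓ t * P.v y zs j i ℓ t := fun ℓ _ i _ =>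
    mul_nonneg (mul_nonneg (hr i) (D_nonneg hd j ℓ t)) (v_nonneg hρ0 hρ1 hy j i ℓ t)
  have hRnn' : (0:ℝ) ≤ ∑ ℓ ∈ Finset.range t, ∑ i ∈ P.considered j,
      P.r i * P.D j ℓ t * P.v y zs j i ℓ t :=
    Finset.sum_nonneg fun ℓ hℓ => Finset.sum_nonneg fun i hi => hRnn ℓ hℓ i hi
  by_cases h : ∃ i, P.IsCapture y' zs j t ∧ P.IsPatron y' zs j t i ∧ zs i t = 1
  swap
  · -- no capture through the follower at (j, t): left side is zero
    refine le_trans (le_of_eq (Finset.sum_eq_zero ?_)) hRnn'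
    intro ℓ _
    refine Finset.sum_eq_zero ?_
    intro i _
    have hv0 : P.v y' zs j i ℓ t = 0 := by
      unfold v
      rw [if_neg]
      rintro ⟨hc, -, hpat, hz⟩
      exact h ⟨i, hc, hpat, hz⟩
    rw [hv0]; ring
  · obtain ⟨i0, hcap, hpat, hz1⟩ := h
    set ℓ0 := P.lastCap y' zs j t with hℓ0def
    have hi0p : P.pref j (some i0) none := (Finset.mem_filter.1 hpat.1).2.1
    have hi0c : i0 ∈ P.considered j := Finset.mem_filter.2 ⟨Finset.mem_univ _, hi0p⟩
    have hℓ0t : ℓ0 < t := lastCap_lt y' zs j ht.1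
    have hv' : P.v y' zs j i0 ℓ0 t = 1 - P.ρ * y' i0 t := by
      unfold v; rw [if_pos ⟨hcap, rfl, hpat, hz1⟩]
    -- collapse the left-hand side to a single term
    have hLHS : (∑ ℓ ∈ Finset.range t, ∑ i ∈ P.considered j,
        P.r i * P.D j ℓ t * P.v y' zs j i ℓ t *
          (1 - (∑ k ∈ P.considered j, ∑ s ∈ Finset.Ioo ℓ t, y k s)
             - (∑ k ∈ Finset.univ.filter fun k => P.pref j (some k) (some i), y k t)
             - (if P.v y' zs j i ℓ t = 1 ∧ 0 < P.ρ then 1 else 0) * y i t))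
        = P.r i0 * P.D j ℓ0 t * P.v y' zs j i0 ℓ0 t *
          (1 - (∑ k ∈ P.considered j, ∑ s ∈ Finset.Ioo ℓ0 t, y k s)
             - (∑ k ∈ Finset.univ.filter fun k => P.pref j (some k) (some i0), y k t)
             - (if P.v y' zs j i0 ℓ0 t = 1 ∧ 0 < P.ρ then 1 else 0) * y i0 t) := by
      rw [Finset.sum_eq_single_of_mem ℓ0 (Finset.mem_range.2 hℓ0t)]
      · refine Finset.sum_eq_single_of_mem i0 hi0c ?_
        intro i _ hne
        have hv0 : P.v y' zs j i ℓ0 t = 0 := by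
          unfold v
          rw [if_neg]
          rintro ⟨-, -, hpat', -⟩
          exact hne (isPatron_unique hpref hpat' hpat)
        rw [hv0]; ring
      · intro ℓ _ hne
        refine Finset.sum_eq_zero ?_
        intro i _
        have hv0 : P.v y' zs j i ℓ t = 0 := by
          unfold v
          rw [if_neg]
          rintro ⟨-, hℓ, -, -⟩
          exact hne (hℓ.trans hℓ0def.symm)
        rw [hv0]; ring
    rw [hLHS]
    set A : ℝ := ∑ k ∈ P.considered j, ∑ s ∈ Finset.Ioo ℓ0 t, y k s with hAdef
    set B : ℝ := ∑ k ∈ Finset.univ.filter fun k => P.pref j (some k) (some i0), y k t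
      with hBdef
    set C : ℝ := (if P.v y' zs j i0 ℓ0 t = 1 ∧ 0 < P.ρ then 1 else 0) * y i0 t with hCdef
    have hynn : ∀ (k : I), ∀ s ∈ Finset.Ioo ℓ0 t, 0 ≤ y k s := by
      intro k s hs
      rw [Finset.mem_Ioo] at hs
      exact sched_nonneg hy (by omega) (by omega) k
    have hAnn : 0 ≤ A :=
      Finset.sum_nonneg fun k _ => Finset.sum_nonneg fun s hs => hynn k s hs
    have hBnn : 0 ≤ B :=
      Finset.sum_nonneg fun k _ => sched_nonneg hy ht.1 ht.2 k
    have hCnn : 0 ≤ C := by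
      rw [hCdef]
      split_ifs <;> simp [sched_nonneg hy ht.1 ht.2 i0]
    have hv'nn : 0 ≤ P.v y' zs j i0 ℓ0 t := v_nonneg hρ0 hρ1 hy' j i0 ℓ0 t
    have hrDnn : 0 ≤ P.r i0 * P.D j ℓ0 t * P.v y' zs j i0 ℓ0 t :=
      mul_nonneg (mul_nonneg (hr i0) (D_nonneg hd j ℓ0 t)) hv'nn
    by_cases hM : 0 < 1 - A - B - C
    swap
    · -- nonpositive multiplier: left term ≤ 0 ≤ right-hand side
      refine le_trans ?_ hRnn'
      have : 1 - A - B - C ≤ 0 := by linarith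
      nlinarith
    · -- positive multiplier: extract the structural facts
      have hABC : A + B + C < 1 := by linarith
      have fA : ∀ k ∈ P.considered j, ∀ s ∈ Finset.Ioo ℓ0 t, y k s = 0 := by
        intro k hk s hs
        have h1 : y k s ≤ ∑ s ∈ Finset.Ioo ℓ0 t, y k s :=
          Finset.single_le_sum (fun s hs => hynn k s hs) hs
        have h2 : (∑ s ∈ Finset.Ioo ℓ0 t, y k s) ≤ A :=
          Finset.single_le_sum
            (fun k _ => Finset.sum_nonneg fun s hs => hynn k s hs) hk
        have hlt : y k s < 1 := by linarith
        rw [Finset.mem_Ioo] at hs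
        rcases (hy s (by omega) (by omega)).1 k with h | h
        · exact h
        · rw [h] at hlt; linarith
      have fB : ∀ k, P.pref j (some k) (some i0) → y k t = 0 := by
        intro k hk
        have h1 : y k t ≤ B :=
          Finset.single_le_sum (fun k _ => sched_nonneg hy ht.1 ht.2 k)
            (Finset.mem_filter.2 ⟨Finset.mem_univ _, hk⟩)
        have hlt : y k t < 1 := by linarith
        rcases (hy t ht.1 ht.2).1 k with h | h
        · exact h
        · rw [h] at hlt; linarith
      -- t is a capture period for (y, zs) and i0 is the patron
      have hi0mem : i0 ∈ P.captureSet y zs j t :=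
        Finset.mem_filter.2 ⟨Finset.mem_univ _, hi0p, Or.inr hz1⟩
      have capy : P.IsCapture y zs j t := ⟨ht.1, ht.2, ⟨i0, hi0mem⟩⟩
      set ℓ1 := P.lastCap y zs j t with hℓ1def
      have hℓ1t : ℓ1 < t := lastCap_lt y zs j ht.1
      have hℓ1ℓ0 : ℓ1 ≤ ℓ0 := by
        rw [hℓ1def]
        unfold lastCap
        refine Finset.sup_le ?_
        intro s hs
        obtain ⟨hs1, hs2⟩ := Finset.mem_filter.1 hs
        rw [Finset.mem_Ico] at hs1
        by_contra hcon
        simp only [id_eq] at hcon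
        have hsIoo : s ∈ Finset.Ioo ℓ0 t := Finset.mem_Ioo.2 ⟨by omega, hs1.2⟩
        obtain ⟨-, -, k, hk⟩ := hs2
        obtain ⟨-, hkp, hkor⟩ := Finset.mem_filter.1 hk
        have hkc : k ∈ P.considered j := Finset.mem_filter.2 ⟨Finset.mem_univ _, hkp⟩
        rcases hkor with hko | hko
        · rw [fA k hkc s hsIoo] at hko; norm_num at hko
        · have : P.IsCapture y' zs j s :=
            ⟨hs1.1, by omega, ⟨k, Finset.mem_filter.2 ⟨Finset.mem_univ _, hkp, Or.inr hko⟩⟩⟩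
          have h2 := le_lastCap hs1.1 hs1.2 this
          rw [← hℓ0def] at h2
          omega
      have paty : P.IsPatron y zs j t i0 := by
        refine ⟨hi0mem, ?_⟩
        intro k hk hne
        obtain ⟨-, hkp, hkor⟩ := Finset.mem_filter.1 hk
        rcases hkor with hko | hko
        · -- leader opens k at t; k cannot be preferred to i0
          haveI := hpref j
          rcases trichotomous_of (P.pref j) (some k) (some i0) with h1 | h1 | h1
          · rw [fB k h1] at hko; norm_num at hko
          · exact absurd (Option.some_injective _ h1) hne
          · exact h1
        · exact hpat.2 k (Finset.mem_filter.2 ⟨Finset.mem_univ _, hkp, Or.inr hko⟩) hne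
      have hv1 : P.v y zs j i0 ℓ1 t = 1 - P.ρ * y i0 t := by
        unfold v; rw [if_pos ⟨capy, rfl, paty, hz1⟩]
      -- right-hand side is at least the single term at (ℓ1, i0)
      have hRHS : P.r i0 * P.D j ℓ1 t * (1 - P.ρ * y i0 t) ≤
          ∑ ℓ ∈ Finset.range t, ∑ i ∈ P.considered j,
            P.r i * P.D j ℓ t * P.v y zs j i ℓ t := by
        have hterm : P.r i0 * P.D j ℓ1 t * (1 - P.ρ * y i0 t) ≤
            ∑ i ∈ P.considered j, P.r i * P.D j ℓ1 t * P.v y zs j i ℓ1 t := by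
          rw [← hv1]
          exact Finset.single_le_sum
            (fun i hi => hRnn ℓ1 (Finset.mem_range.2 hℓ1t) i hi) hi0c
        refine le_trans hterm ?_
        exact Finset.single_le_sum
          (f := fun ℓ => ∑ i ∈ P.considered j, P.r i * P.D j ℓ t * P.v y zs j i ℓ t)
          (fun ℓ hℓ => Finset.sum_nonneg fun i hi => hRnn ℓ hℓ i hi)
          (Finset.mem_range.2 hℓ1t)
      refine le_trans ?_ hRHS
      -- compare the single terms
      have hA0 : A = 0 :=
        Finset.sum_eq_zero fun k hk => Finset.sum_eq_zero fun s hs => fA k hk s hs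
      have hB0 : B = 0 := Finset.sum_eq_zero fun k hk =>
        fB k (Finset.mem_filter.1 hk).2
      have hDle : P.D j ℓ0 t ≤ P.D j ℓ1 t := D_anti hd hℓ1ℓ0 j t
      have hkey : P.v y' zs j i0 ℓ0 t * (1 - A - B - C) ≤ 1 - P.ρ * y i0 t := by
        rw [hA0, hB0, hCdef]
        split_ifs with hind
        · -- v' = 1 and ρ > 0 : then y i0 t = 0
          have hy0 : y i0 t = 0 := by
            have h1 : y i0 t ≤ C := by
              rw [hCdef, if_pos hind, one_mul]
            have hlt : y i0 t < 1 := by linarith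
            rcases (hy t ht.1 ht.2).1 i0 with h | h
            · exact h
            · rw [h] at hlt; linarith
          rw [hind.1, hy0]; norm_num
        · rw [hv']
          push_neg at hind
          rcases lt_or_eq_of_le hρ0 with hρ | hρ
          · -- ρ > 0 and v' ≠ 1, so y' i0 t = 1
            have hv'ne : 1 - P.ρ * y' i0 t ≠ 1 := by
              intro hcon
              have := hind (by rw [hv', hcon])
              linarith
            have hy'1 : y' i0 t = 1 := by
              rcases (hy' t ht.1 ht.2).1 i0 with h | h
              · exfalso; apply hv'ne; rw [h]; ring
              · exact h
            have hyle : y i0 t ≤ 1 := sched_le_one hy ht.1 ht.2 i0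
            rw [hy'1]
            nlinarith
          · rw [← hρ]; norm_num
      have hvM : 0 ≤ P.v y' zs j i0 ℓ0 t * (1 - A - B - C) :=
        mul_nonneg hv'nn (le_of_lt hM)
      calc P.r i0 * P.D j ℓ0 t * P.v y' zs j i0 ℓ0 t * (1 - A - B - C)
          = P.r i0 * (P.D j ℓ0 t * (P.v y' zs j i0 ℓ0 t * (1 - A - B - C))) := by ring
        _ ≤ P.r i0 * (P.D j ℓ1 t * (1 - P.ρ * y i0 t)) := by
            refine mul_le_mul_of_nonneg_left ?_ (hr i0)
            exact mul_le_mul hDle hkey hvM (D_nonneg hd j ℓ1 t)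
        _ = P.r i0 * P.D j ℓ1 t * (1 - P.ρ * y i0 t) := by ring

/-- **Lemma 1, validity.**  The tailored value-function cut built from a bilevel
feasible pair `(y', zs)` holds for every bilevel feasible pair `(y, z)`. -/
theorem tailored_cut_valid (P : CDFLP I J) (hP : P.Valid)
    (y' zs : I → ℕ → ℝ) (hfeas : P.BilevelFeasible y' zs)
    (y z : I → ℕ → ℝ) (hyz : P.BilevelFeasible y z) :
    P.tailoredBound y' zs y ≤ P.profitF y z := by
  obtain ⟨hy', hzs, -⟩ := hfeas
  obtain ⟨hy, hz, hopt⟩ := hyz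
  exact le_trans (tailored_le_profitF P hP hy' hzs hy) (hopt zs hzs)

end CDFLP
end

section
/- Tailored value-function cut, separation (second part of Lemma 1 of the paper): let (y′,z*) be a bilevel feasible pair, let Φ_tail be the tailored value-function bound built from (y′,z*), and let z′ ∈ 𝒮 satisfy π^F(y′,z′) < π^F(y′,z*) (i.e., (y′,z′) is integer feasible but bilevel infeasible). Then π^F(y′,z′) < Φ_tail(y′); that is, the pair (y′,z′) violates the tailored value-function cut. -/
open Finset

attribute [local instance] Classical.propDecidable

namespace CDFLP

variable {I J : Type*} [Fintype I] [Fintype J]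

/-- **Lemma 1, separation.**  The tailored value-function cut built from a bilevel
feasible pair `(y', zs)` is violated by every integer-feasible but bilevel-infeasible
pair `(y', z')`. -/
theorem tailored_cut_separation (P : CDFLP I J) (hP : P.Valid)
    (y' zs : I → ℕ → ℝ) (hfeas : P.BilevelFeasible y' zs)
    (z' : I → ℕ → ℝ) (hz' : P.IsSched z')
    (hinf : P.profitF y' z' < P.profitF y' zs) :
    P.profitF y' z' < P.tailoredBound y' zs y' := by
  have hy' : P.IsSched y' := hfeas.1
  have key : P.tailoredBound y' zs y' = P.profitF y' zs := by
    unfold tailoredBound profitF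
    refine Finset.sum_congr rfl fun t ht => Finset.sum_congr rfl fun ℓ hℓ =>
      Finset.sum_congr rfl fun j _ => Finset.sum_congr rfl fun i hi => ?_
    haveI hsto : IsStrictTotalOrder (Option I) (P.pref j) := hP.2.2.2.2.2 j
    rw [Finset.mem_Icc] at ht
    rw [Finset.mem_range] at hℓ
    rw [considered, Finset.mem_filter] at hi
    by_cases hv : P.v y' zs j i ℓ t = 0
    · rw [hv]; ring
    · have hcond : P.IsCapture y' zs j t ∧ ℓ = P.lastCap y' zs j t ∧
          P.IsPatron y' zs j t i ∧ zs i t = 1 := by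
        by_contra h; exact hv (by rw [v, if_neg h])
      obtain ⟨hcap, hlast, hpat, hzs⟩ := hcond
      have hvval : P.v y' zs j i ℓ t = 1 - P.ρ * y' i t := by
        rw [v, if_pos ⟨hcap, hlast, hpat, hzs⟩]
      -- first sum is zero
      have h1 : (∑ k ∈ P.considered j, ∑ s ∈ Finset.Ioo ℓ t, y' k s) = 0 := by
        refine Finset.sum_eq_zero fun k hk => Finset.sum_eq_zero fun s hs => ?_
        rw [Finset.mem_Ioo] at hs
        rw [considered, Finset.mem_filter] at hk
        have hs1 : 1 ≤ s := Nat.one_le_iff_ne_zero.mpr (by omega)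
        have hsT : s ≤ P.T := by omega
        rcases (hy' s hs1 hsT).1 k with h0 | h1
        · exact h0
        · exfalso
          have hmem : k ∈ P.captureSet y' zs j s := by
            rw [captureSet, Finset.mem_filter]
            exact ⟨Finset.mem_univ _, hk.2, Or.inl h1⟩
          have hscap : P.IsCapture y' zs j s := ⟨hs1, hsT, ⟨k, hmem⟩⟩
          have : s ≤ P.lastCap y' zs j t := by
            refine Finset.le_sup (f := id) ?_
            rw [Finset.mem_filter, Finset.mem_Ico]
            exact ⟨⟨hs1, hs.2⟩, hscap⟩
          omega
      -- second sum is zero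
      have h2 : (∑ k ∈ Finset.univ.filter fun k => P.pref j (some k) (some i), y' k t) = 0 := by
        refine Finset.sum_eq_zero fun k hk => ?_
        rw [Finset.mem_filter] at hk
        rcases (hy' t ht.1 ht.2).1 k with h0 | h1
        · exact h0
        · exfalso
          have hk0 : P.pref j (some k) none := trans_of (P.pref j) hk.2 hi.2
          have hmem : k ∈ P.captureSet y' zs j t := by
            rw [captureSet, Finset.mem_filter]
            exact ⟨Finset.mem_univ _, hk0, Or.inl h1⟩
          have hki : k ≠ i := by
            rintro rfl; exact irrefl_of (P.pref j) _ hk.2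
          have := hpat.2 k hmem hki
          exact irrefl_of (P.pref j) _ (trans_of (P.pref j) this hk.2)
      -- indicator term is zero
      have h3 : (if P.v y' zs j i ℓ t = 1 ∧ 0 < P.ρ then (1:ℝ) else 0) * y' i t = 0 := by
        split_ifs with h
        · have : P.ρ * y' i t = 0 := by
            have := h.1; rw [hvval] at this; linarith
          rcases mul_eq_zero.mp this with hρ | hy0
          · exact absurd hρ (ne_of_gt h.2)
          · rw [hy0, mul_zero]
        · rw [zero_mul]
      rw [h1, h2, h3]; ring
  rw [key]; exact hinf

end CDFLP
end

section
/- Tightness of the tightened value-function bound (claim of Section 4.2.3 of the paper): for every follower schedule z* ∈ 𝒮 and every leader schedule y ∈ 𝒮, the tightened value-function bound of z* evaluated at y equals the follower's profit with schedule z* against y, i.e., Φ_tight(y) = π^F(y,z*). In particular, the tightened cut provides a tight lower bound on the profit of the follower with location schedule z* against any location schedule y of the leader. -/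
open Finset

attribute [local instance] Classical.propDecidable

namespace CDFLP

variable {I J : Type*} [Fintype I] [Fintype J]

/-- `o_{ij}^{st}(y)`: the maximum of the `y`-values at locations/periods through which
the leader can intercept the demand portion spawned at period `s` and captured at
period `t` through location `i`; the maximum of an empty set is taken as `0`. -/
noncomputable def oMax (P : CDFLP I J) (y : I → ℕ → ℝ) (j : J) (i : I) (s t : ℕ) : ℝ :=
  max ((Finset.Ico s t ×ˢ P.considered j).fold max 0 fun p => y p.2 p.1)
      ((Finset.univ.filter fun k => P.pref j (some k) (some i)).fold max 0 fun k => y k t)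

/-- The tightened value-function bound of the follower schedule `zs`, evaluated at a
leader schedule `y` (the `v`-values are taken against the empty leader schedule). -/
noncomputable def tightenedBound (P : CDFLP I J) (zs y : I → ℕ → ℝ) : ℝ :=
  ∑ t ∈ Finset.Icc 1 P.T, ∑ ℓ ∈ Finset.range t, ∑ j : J, ∑ i ∈ P.considered j,
    P.r i * P.v (fun _ _ => 0) zs j i ℓ t *
      (P.D j ℓ t - (∑ s ∈ Finset.Icc (ℓ + 1) t, P.d j s * P.oMax y j i s t)
        - P.ρ * y i t * ∑ s ∈ Finset.Icc (ℓ + 1) t, P.d j s * (1 - P.oMax y j i s t))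

section TightProof

variable {P : CDFLP I J}

lemma sched_uniq {w : I → ℕ → ℝ} (hw : P.IsSched w) {t : ℕ} (h1 : 1 ≤ t) (h2 : t ≤ P.T)
    {i k : I} (hi : w i t = 1) (hk : w k t = 1) : i = k := by
  by_contra hne
  have hb := (hw t h1 h2).1
  have hsum := (hw t h1 h2).2
  have h2le : (2:ℝ) ≤ ∑ x, w x t := by
    have hle : ∑ x ∈ ({i, k} : Finset I), w x t ≤ ∑ x, w x t :=
      Finset.sum_le_sum_of_subset_of_nonneg (Finset.subset_univ _)
        (fun x _ _ => by rcases hb x with h | h <;> simp [h])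
    rw [Finset.sum_pair hne, hi, hk] at hle
    linarith
  linarith

lemma oMax_le_one' (P : CDFLP I J) {y : I → ℕ → ℝ} (hy : P.IsSched y) (j : J) (i : I)
    {s t : ℕ} (hs : 1 ≤ s) (h1t : 1 ≤ t) (ht : t ≤ P.T) : P.oMax y j i s t ≤ 1 := by
  rw [CDFLP.oMax]
  apply max_le
  · refine (Finset.fold_max_le _).2 ⟨zero_le_one, fun p hp => ?_⟩
    obtain ⟨hp1, hp2⟩ := Finset.mem_product.1 hp
    obtain ⟨ha, hb⟩ := Finset.mem_Ico.1 hp1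
    rcases (hy p.1 (le_trans hs ha) (by omega)).1 p.2 with h | h <;> simp [h]
  · refine (Finset.fold_max_le _).2 ⟨zero_le_one, fun k _ => ?_⟩
    rcases (hy t h1t ht).1 k with h | h <;> simp [h]

lemma key (P : CDFLP I J) (hP : P.Valid) {zs y : I → ℕ → ℝ}
    (hzs : P.IsSched zs) (hy : P.IsSched y)
    {t : ℕ} (h1 : 1 ≤ t) (h2 : t ≤ P.T) (j : J) :
    (∑ ℓ ∈ Finset.range t, ∑ i ∈ P.considered j,
      P.r i * P.v (fun _ _ => 0) zs j i ℓ t *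
        (P.D j ℓ t - (∑ s ∈ Finset.Icc (ℓ + 1) t, P.d j s * P.oMax y j i s t)
          - P.ρ * y i t * ∑ s ∈ Finset.Icc (ℓ + 1) t, P.d j s * (1 - P.oMax y j i s t)))
    = ∑ ℓ ∈ Finset.range t, ∑ i ∈ P.considered j,
        P.r i * P.D j ℓ t * P.v y zs j i ℓ t := by
  haveI := hP.2.2.2.2.2 j
  by_cases hcap : P.IsCapture (fun _ _ => 0) zs j t
  case neg =>
    -- no follower capture at t: both sides vanish
    have hL : ∀ ℓ ∈ Finset.range t, ∀ i ∈ P.considered j,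
        P.v (fun _ _ => 0) zs j i ℓ t = 0 := by
      intro ℓ _ i _
      rw [CDFLP.v, if_neg (fun hc => hcap hc.1)]
    have hR : ∀ ℓ ∈ Finset.range t, ∀ i ∈ P.considered j,
        P.v y zs j i ℓ t = 0 := by
      intro ℓ _ i _
      rw [CDFLP.v, if_neg]
      rintro ⟨-, -, hpat, hz1⟩
      have hmem := hpat.1
      rw [CDFLP.captureSet, Finset.mem_filter] at hmem
      exact hcap ⟨h1, h2, ⟨i, by
        rw [CDFLP.captureSet, Finset.mem_filter]
        exact ⟨Finset.mem_univ _, hmem.2.1, Or.inr hz1⟩⟩⟩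
    rw [Finset.sum_eq_zero fun ℓ hℓ => Finset.sum_eq_zero fun i hi => by
          rw [hL ℓ hℓ i hi]; ring,
        Finset.sum_eq_zero fun ℓ hℓ => Finset.sum_eq_zero fun i hi => by
          rw [hR ℓ hℓ i hi]; ring]
  case pos =>
    obtain ⟨i0, hi0mem⟩ := hcap.2.2
    rw [CDFLP.captureSet, Finset.mem_filter] at hi0mem
    have hcons : P.pref j (some i0) none := hi0mem.2.1
    have hz0 : zs i0 t = 1 := by
      rcases hi0mem.2.2 with h | h
      · norm_num at h
      · exact h
    have hi0cons : i0 ∈ P.considered j :=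
      Finset.mem_filter.2 ⟨Finset.mem_univ _, hcons⟩
    -- the capture set of (0, zs) at t is {i0}
    have hcs : ∀ i, i ∈ P.captureSet (fun _ _ => 0) zs j t → i = i0 := by
      intro i hi
      rw [CDFLP.captureSet, Finset.mem_filter] at hi
      rcases hi.2.2 with h | h
      · norm_num at h
      · exact sched_uniq hzs h1 h2 h hz0
    set ℓ0 := P.lastCap (fun _ _ => 0) zs j t with hℓ0def
    set ℓ1 := P.lastCap y zs j t with hℓ1def
    have hℓ0lt : ℓ0 < t := by
      rw [hℓ0def, CDFLP.lastCap]
      refine (Finset.sup_lt_iff (by rw [Nat.bot_eq_zero]; omega)).2 fun b hb => ?_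
      exact (Finset.mem_Ico.1 (Finset.mem_filter.1 hb).1).2
    have hℓ1lt : ℓ1 < t := by
      rw [hℓ1def, CDFLP.lastCap]
      refine (Finset.sup_lt_iff (by rw [Nat.bot_eq_zero]; omega)).2 fun b hb => ?_
      exact (Finset.mem_Ico.1 (Finset.mem_filter.1 hb).1).2
    have hℓ01 : ℓ0 ≤ ℓ1 := by
      rw [hℓ0def, hℓ1def, CDFLP.lastCap, CDFLP.lastCap]
      refine Finset.sup_mono fun s hs => ?_
      rw [Finset.mem_filter] at hs ⊢
      obtain ⟨hIco, hs1, hs2, k, hk⟩ := hs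
      rw [CDFLP.captureSet, Finset.mem_filter] at hk
      refine ⟨hIco, hs1, hs2, ⟨k, ?_⟩⟩
      rw [CDFLP.captureSet, Finset.mem_filter]
      rcases hk.2.2 with h | h
      · norm_num at h
      · exact ⟨Finset.mem_univ _, hk.2.1, Or.inr h⟩
    -- patron of (0,zs) at t is i0
    have hpat0 : P.IsPatron (fun _ _ => 0) zs j t i0 := by
      constructor
      · rw [CDFLP.captureSet, Finset.mem_filter]
        exact ⟨Finset.mem_univ _, hcons, Or.inr hz0⟩
      · intro k hk hkne
        exact absurd (hcs k hk) hkne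
    have hv0pos : P.v (fun _ _ => 0) zs j i0 ℓ0 t = 1 := by
      rw [CDFLP.v, if_pos ⟨hcap, hℓ0def, hpat0, hz0⟩]
      norm_num
    have hv0zero : ∀ ℓ i, ¬(ℓ = ℓ0 ∧ i = i0) → P.v (fun _ _ => 0) zs j i ℓ t = 0 := by
      intro ℓ i hne
      rw [CDFLP.v, if_neg]
      rintro ⟨-, hℓ, hpat, -⟩
      exact hne ⟨hℓ ▸ hℓ0def ▸ rfl, hcs i hpat.1⟩
    have hvyzero : ∀ ℓ i, P.v y zs j i ℓ t ≠ 0 →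
        ℓ = ℓ1 ∧ i = i0 ∧ P.IsPatron y zs j t i0 := by
      intro ℓ i hne
      rw [CDFLP.v] at hne
      by_cases hc : P.IsCapture y zs j t ∧ ℓ = P.lastCap y zs j t ∧
          P.IsPatron y zs j t i ∧ zs i t = 1
      · obtain ⟨-, hℓ, hpat, hz⟩ := hc
        have hii0 : i = i0 := sched_uniq hzs h1 h2 hz hz0
        exact ⟨hℓ, hii0, hii0 ▸ hpat⟩
      · rw [if_neg hc] at hne; exact absurd rfl hne
    -- reduce LHS to the single (ℓ0, i0) term
    have hLHS : (∑ ℓ ∈ Finset.range t, ∑ i ∈ P.considered j,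
        P.r i * P.v (fun _ _ => 0) zs j i ℓ t *
          (P.D j ℓ t - (∑ s ∈ Finset.Icc (ℓ + 1) t, P.d j s * P.oMax y j i s t)
            - P.ρ * y i t * ∑ s ∈ Finset.Icc (ℓ + 1) t, P.d j s * (1 - P.oMax y j i s t)))
      = P.r i0 *
          (P.D j ℓ0 t - (∑ s ∈ Finset.Icc (ℓ0 + 1) t, P.d j s * P.oMax y j i0 s t)
            - P.ρ * y i0 t *
              ∑ s ∈ Finset.Icc (ℓ0 + 1) t, P.d j s * (1 - P.oMax y j i0 s t)) := by
      rw [Finset.sum_eq_single_of_mem ℓ0 (Finset.mem_range.2 hℓ0lt)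
        (fun ℓ _ hℓne => Finset.sum_eq_zero fun i _ => by
          rw [hv0zero ℓ i fun h => hℓne h.1]; ring)]
      rw [Finset.sum_eq_single_of_mem i0 hi0cons
        (fun i _ hine => by rw [hv0zero ℓ0 i fun h => hine h.2]; ring)]
      rw [hv0pos]; ring
    rw [hLHS]
    by_cases hbet : ∃ k, y k t = 1 ∧ P.pref j (some k) (some i0)
    · -- leader opens a better location at t: both sides are 0
      obtain ⟨k, hykt, hki0⟩ := hbet
      have hkcons : P.pref j (some k) none := _root_.trans_of (P.pref j) hki0 hcons
      have hRHS : ∀ ℓ ∈ Finset.range t, ∀ i ∈ P.considered j,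
          P.v y zs j i ℓ t = 0 := by
        intro ℓ _ i _
        by_contra hne
        obtain ⟨-, -, hpat⟩ := hvyzero ℓ i hne
        have hkmem : k ∈ P.captureSet y zs j t := by
          rw [CDFLP.captureSet, Finset.mem_filter]
          exact ⟨Finset.mem_univ _, hkcons, Or.inl hykt⟩
        have hkne : k ≠ i0 := by
          rintro rfl
          exact _root_.irrefl_of (P.pref j) _ hki0
        have := hpat.2 k hkmem hkne
        exact _root_.irrefl_of (P.pref j) _ (_root_.trans_of (P.pref j) hki0 this)
      have homax : ∀ s ∈ Finset.Icc (ℓ0 + 1) t, P.oMax y j i0 s t = 1 := by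
        intro s hs
        obtain ⟨hs1, hs2⟩ := Finset.mem_Icc.1 hs
        refine le_antisymm (P.oMax_le_one' hy j i0 (by omega) h1 h2) ?_
        refine le_trans ?_ (le_max_right _ _)
        refine (Finset.le_fold_max _).2 (Or.inr ⟨k, Finset.mem_filter.2
          ⟨Finset.mem_univ _, hki0⟩, by rw [hykt]⟩)
      have hzero : P.D j ℓ0 t - (∑ s ∈ Finset.Icc (ℓ0 + 1) t, P.d j s * P.oMax y j i0 s t)
          - P.ρ * y i0 t *
            ∑ s ∈ Finset.Icc (ℓ0 + 1) t, P.d j s * (1 - P.oMax y j i0 s t) = 0 := by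
        have e1 : (∑ s ∈ Finset.Icc (ℓ0 + 1) t, P.d j s * P.oMax y j i0 s t)
            = ∑ s ∈ Finset.Icc (ℓ0 + 1) t, P.d j s :=
          Finset.sum_congr rfl fun s hs => by rw [homax s hs, mul_one]
        have e2 : (∑ s ∈ Finset.Icc (ℓ0 + 1) t, P.d j s * (1 - P.oMax y j i0 s t))
            = 0 :=
          Finset.sum_eq_zero fun s hs => by rw [homax s hs]; ring
        rw [e1, e2, CDFLP.D]; ring
      rw [hzero, Finset.sum_eq_zero fun ℓ hℓ => Finset.sum_eq_zero fun i hi => by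
        rw [hRHS ℓ hℓ i hi]; ring]
      ring
    · -- no better leader location at t
      push_neg at hbet
      have hpaty : P.IsPatron y zs j t i0 := by
        constructor
        · rw [CDFLP.captureSet, Finset.mem_filter]
          exact ⟨Finset.mem_univ _, hcons, Or.inr hz0⟩
        · intro k hk hkne
          rw [CDFLP.captureSet, Finset.mem_filter] at hk
          have hyk : y k t = 1 := by
            rcases hk.2.2 with h | h
            · exact h
            · exact absurd (sched_uniq hzs h1 h2 h hz0) hkne
          rcases _root_.trichotomous_of (P.pref j) (some i0) (some k) with h | h | h
          · exact h
          · exact absurd (Option.some.inj h).symm hkne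
          · exact absurd h (hbet k hyk)
      have hcapy : P.IsCapture y zs j t :=
        ⟨h1, h2, ⟨i0, by
          rw [CDFLP.captureSet, Finset.mem_filter]
          exact ⟨Finset.mem_univ _, hcons, Or.inr hz0⟩⟩⟩
      have hvypos : P.v y zs j i0 ℓ1 t = 1 - P.ρ * y i0 t := by
        rw [CDFLP.v, if_pos ⟨hcapy, hℓ1def, hpaty, hz0⟩]
      have hRHS : (∑ ℓ ∈ Finset.range t, ∑ i ∈ P.considered j,
          P.r i * P.D j ℓ t * P.v y zs j i ℓ t)
        = P.r i0 * P.D j ℓ1 t * (1 - P.ρ * y i0 t) := by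
        rw [Finset.sum_eq_single_of_mem ℓ1 (Finset.mem_range.2 hℓ1lt)
          (fun ℓ _ hℓne => Finset.sum_eq_zero fun i _ => by
            have hv : P.v y zs j i ℓ t = 0 := by
              by_contra hne; exact hℓne (hvyzero ℓ i hne).1
            rw [hv]; ring)]
        rw [Finset.sum_eq_single_of_mem i0 hi0cons
          (fun i _ hine => by
            have hv : P.v y zs j i ℓ1 t = 0 := by
              by_contra hne; exact hine (hvyzero ℓ1 i hne).2.1
            rw [hv]; ring)]
        rw [hvypos]
      rw [hRHS]
      -- characterize oMax on (ℓ0, t]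
      have homax : ∀ s, ℓ0 < s → s ≤ t →
          P.oMax y j i0 s t = if s ≤ ℓ1 then 1 else 0 := by
        intro s hs hst
        have hs1 : 1 ≤ s := by omega
        have hB : ((Finset.univ.filter fun k => P.pref j (some k) (some i0)).fold max 0
            fun k => y k t) = 0 := by
          refine le_antisymm ((Finset.fold_max_le _).2 ⟨le_refl 0, fun k hk => ?_⟩)
            ((Finset.le_fold_max _).2 (Or.inl le_rfl))
          rcases (hy t h1 h2).1 k with h | h
          · rw [h]
          · exact absurd ((Finset.mem_filter.1 hk).2) (hbet k h)
        by_cases hsl : s ≤ ℓ1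
        · -- there is a leader interception in [s, t)
          have hne0 : ℓ1 ≠ 0 := by omega
          have hnonempty : ((Finset.Ico 1 t).filter fun s' =>
              P.IsCapture y zs j s').Nonempty := by
            by_contra h
            rw [Finset.not_nonempty_iff_eq_empty] at h
            have : ℓ1 = 0 := by rw [hℓ1def, CDFLP.lastCap, h, Finset.sup_empty]; rfl
            exact hne0 this
          obtain ⟨b, hbmem, hbsup⟩ :=
            Finset.exists_mem_eq_sup ((Finset.Ico 1 t).filter fun s' =>
              P.IsCapture y zs j s') hnonempty id
          have hℓ1eq : ℓ1 = b := by rw [hℓ1def, CDFLP.lastCap, hbsup]; rfl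
          have hbfil := Finset.mem_filter.1 hbmem
          obtain ⟨k, hk⟩ := hbfil.2.2.2
          rw [CDFLP.captureSet, Finset.mem_filter] at hk
          have hbIco := Finset.mem_Ico.1 hbfil.1
          have hyk1 : y k b = 1 := by
            rcases hk.2.2 with h | h
            · exact h
            · exfalso
              have hcapb : P.IsCapture (fun _ _ => 0) zs j b :=
                ⟨hbIco.1, by omega, ⟨k, by
                  rw [CDFLP.captureSet, Finset.mem_filter]
                  exact ⟨Finset.mem_univ _, hk.2.1, Or.inr h⟩⟩⟩
              have hble : b ≤ ℓ0 := by
                rw [hℓ0def, CDFLP.lastCap]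
                exact Finset.le_sup (f := id)
                  (Finset.mem_filter.2 ⟨Finset.mem_Ico.2 hbIco, hcapb⟩)
              omega
          have hA1 : (1:ℝ) ≤ (Finset.Ico s t ×ˢ P.considered j).fold max 0
              fun p => y p.2 p.1 := by
            refine (Finset.le_fold_max _).2 (Or.inr ⟨(b, k), ?_, by rw [hyk1]⟩)
            refine Finset.mem_product.2 ⟨Finset.mem_Ico.2 ⟨hℓ1eq ▸ hsl, hbIco.2⟩, ?_⟩
            exact Finset.mem_filter.2 ⟨Finset.mem_univ _, hk.2.1⟩
          rw [if_pos hsl]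
          refine le_antisymm (P.oMax_le_one' hy j i0 hs1 h1 h2) ?_
          rw [CDFLP.oMax]
          exact le_trans hA1 (le_max_left _ _)
        · -- no interception in [s, t)
          have hA0 : ((Finset.Ico s t ×ˢ P.considered j).fold max 0
              fun p => y p.2 p.1) = 0 := by
            refine le_antisymm ((Finset.fold_max_le _).2 ⟨le_refl 0, fun p hp => ?_⟩)
              ((Finset.le_fold_max _).2 (Or.inl le_rfl))
            obtain ⟨hp1, hp2⟩ := Finset.mem_product.1 hp
            obtain ⟨ha, hb⟩ := Finset.mem_Ico.1 hp1
            rcases (hy p.1 (by omega) (by omega)).1 p.2 with h | h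
            · rw [h]
            · exfalso
              have hcapp : P.IsCapture y zs j p.1 :=
                ⟨by omega, by omega, ⟨p.2, by
                  rw [CDFLP.captureSet, Finset.mem_filter]
                  exact ⟨Finset.mem_univ _, (Finset.mem_filter.1 hp2).2, Or.inl h⟩⟩⟩
              have hple : p.1 ≤ ℓ1 := by
                rw [hℓ1def, CDFLP.lastCap]
                exact Finset.le_sup (f := id)
                  (Finset.mem_filter.2 ⟨Finset.mem_Ico.2 ⟨by omega, hb⟩, hcapp⟩)
              omega
          rw [if_neg hsl, CDFLP.oMax, hA0, hB, max_self]
      -- now compute the sums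
      have hIcc : ∀ a b : ℕ, Finset.Icc (a + 1) b = Finset.Ioc a b := fun a b => by
        rw [← Finset.Icc_add_one_left_eq_Ioc]
      have hA : (∑ s ∈ Finset.Icc (ℓ0 + 1) t, P.d j s * P.oMax y j i0 s t)
          = ∑ s ∈ Finset.Ioc ℓ0 ℓ1, P.d j s := by
        rw [hIcc, ← Finset.sum_Ioc_consecutive _ hℓ01 (le_of_lt hℓ1lt)]
        have e1 : (∑ s ∈ Finset.Ioc ℓ0 ℓ1, P.d j s * P.oMax y j i0 s t)
            = ∑ s ∈ Finset.Ioc ℓ0 ℓ1, P.d j s := by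
          refine Finset.sum_congr rfl fun s hs => ?_
          obtain ⟨ha, hb⟩ := Finset.mem_Ioc.1 hs
          rw [homax s ha (by omega), if_pos hb, mul_one]
        have e2 : (∑ s ∈ Finset.Ioc ℓ1 t, P.d j s * P.oMax y j i0 s t) = 0 := by
          refine Finset.sum_eq_zero fun s hs => ?_
          obtain ⟨ha, hb⟩ := Finset.mem_Ioc.1 hs
          rw [homax s (by omega) hb, if_neg (by omega), mul_zero]
        rw [e1, e2, add_zero]
      have hBsum : (∑ s ∈ Finset.Icc (ℓ0 + 1) t, P.d j s * (1 - P.oMax y j i0 s t))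
          = P.D j ℓ1 t := by
        rw [hIcc, ← Finset.sum_Ioc_consecutive _ hℓ01 (le_of_lt hℓ1lt)]
        have e1 : (∑ s ∈ Finset.Ioc ℓ0 ℓ1, P.d j s * (1 - P.oMax y j i0 s t)) = 0 := by
          refine Finset.sum_eq_zero fun s hs => ?_
          obtain ⟨ha, hb⟩ := Finset.mem_Ioc.1 hs
          rw [homax s ha (by omega), if_pos hb]; ring
        have e2 : (∑ s ∈ Finset.Ioc ℓ1 t, P.d j s * (1 - P.oMax y j i0 s t))
            = ∑ s ∈ Finset.Ioc ℓ1 t, P.d j s := by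
          refine Finset.sum_congr rfl fun s hs => ?_
          obtain ⟨ha, hb⟩ := Finset.mem_Ioc.1 hs
          rw [homax s (by omega) hb, if_neg (by omega)]; ring
        rw [e1, e2, zero_add, CDFLP.D, hIcc]
      have hDsplit : P.D j ℓ0 t = (∑ s ∈ Finset.Ioc ℓ0 ℓ1, P.d j s) + P.D j ℓ1 t := by
        rw [CDFLP.D, CDFLP.D, hIcc, hIcc, Finset.sum_Ioc_consecutive _ hℓ01
          (le_of_lt hℓ1lt)]
      rw [hA, hBsum, hDsplit]
      ring

end TightProof

/-- **Tightness of the tightened bound.**  For every follower schedule `zs` and every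
leader schedule `y`, the tightened value-function bound of `zs` evaluated at `y`
equals the follower's profit with schedule `zs` against `y`. -/
theorem tightened_bound_tight (P : CDFLP I J) (hP : P.Valid)
    (zs : I → ℕ → ℝ) (hzs : P.IsSched zs)
    (y : I → ℕ → ℝ) (hy : P.IsSched y) :
    P.tightenedBound zs y = P.profitF y zs := by
  rw [tightenedBound, profitF]
  refine Finset.sum_congr rfl fun t ht => ?_
  obtain ⟨h1, h2⟩ := Finset.mem_Icc.1 ht
  rw [Finset.sum_comm]
  conv_rhs => rw [Finset.sum_comm]
  exact Finset.sum_congr rfl fun j _ => key P hP hzs hy h1 h2 j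

end CDFLP
end
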